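/- Fix an integer n ≥ 3. For ε > 0, set a₁(ε) = ε^{n−1} and a_i(ε) = 1/ε for 2 ≤ i ≤ n. Then the quantity (∑_i a_i(ε))/(2·∑_j 1/a_j(ε)) = (ε^{n−1} + (n−1)/ε)/(2·(ε^{1−n} + (n−1)ε)) tends to 0 as ε → 0⁺, while the volume of the box ∏_i(−a_i(ε), a_i(ε)), namely ∏_i 2a_i(ε) = 2ⁿ, is independent of ε. -/

import Mathlib

open Real Filter Topology

lemma sum_ite_fin (n : ℕ) (A B : ℝ) :
    ∑ i : Fin (n + 1), (if (i : ℕ) = 0 then A else B) = A + n * B := by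
  rw [Fin.sum_univ_succ]
  simp

lemma prod_ite_fin (n : ℕ) (A B : ℝ) :
    ∏ i : Fin (n + 1), (2 * if (i : ℕ) = 0 then A else B) = 2 * A * (2 * B) ^ n := by
  rw [Fin.prod_univ_succ]
  simp

/-- For `n ≥ 3`, with `a₁(ε) = ε^(n-1)` and `aᵢ(ε) = 1/ε` for `i ≥ 2`, the oscillation
quantity `(∑ᵢ aᵢ(ε)) / (2 ∑ⱼ 1/aⱼ(ε)) = (ε^(n-1) + (n-1)/ε)/(2(ε^(1-n) + (n-1)ε))`
tends to `0` as `ε → 0⁺`, while the volume `∏ᵢ 2aᵢ(ε) = 2ⁿ` of the box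
`∏ᵢ (-aᵢ(ε), aᵢ(ε))` is independent of `ε`. -/
theorem stmt_9 (n : ℕ) (hn : 3 ≤ n) (a : ℝ → Fin n → ℝ)
    (ha : ∀ ε, ∀ i : Fin n, a ε i = if (i : ℕ) = 0 then ε ^ (n - 1) else 1 / ε) :
    (∀ ε : ℝ, 0 < ε →
        (∑ i, a ε i) / (2 * ∑ j, (a ε j)⁻¹) =
          (ε ^ (n - 1) + (n - 1) / ε) / (2 * (ε ^ ((1 : ℤ) - n) + (n - 1) * ε))) ∧
    Tendsto (fun ε : ℝ => (∑ i, a ε i) / (2 * ∑ j, (a ε j)⁻¹)) (𝓝[>] 0) (𝓝 0) ∧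
    (∀ ε : ℝ, 0 < ε → ∏ i, (2 * a ε i) = 2 ^ n) := by
  obtain ⟨m, rfl⟩ : ∃ m, n = m + 3 := ⟨n - 3, by omega⟩
  -- basic sum computations
  have hsum : ∀ ε : ℝ, 0 < ε →
      ∑ i, a ε i = ε ^ (m + 2) + (m + 2) * (1 / ε) := by
    intro ε hε
    have : ∀ i : Fin (m + 3), a ε i = if (i : ℕ) = 0 then ε ^ (m + 2) else 1 / ε := by
      intro i; rw [ha]; norm_num
    rw [Finset.sum_congr rfl fun i _ => this i]
    have := sum_ite_fin (m + 2) (ε ^ (m + 2)) (1 / ε)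
    rw [this]; push_cast; ring
  have hsuminv : ∀ ε : ℝ, 0 < ε →
      ∑ j, (a ε j)⁻¹ = (ε ^ (m + 2))⁻¹ + (m + 2) * ε := by
    intro ε hε
    have : ∀ i : Fin (m + 3), (a ε i)⁻¹ = if (i : ℕ) = 0 then (ε ^ (m + 2))⁻¹ else ε := by
      intro i
      rw [ha]
      by_cases h : (i : ℕ) = 0 <;> simp [h]
    rw [Finset.sum_congr rfl fun i _ => this i]
    have := sum_ite_fin (m + 2) ((ε ^ (m + 2))⁻¹) ε
    rw [this]; push_cast; ring
  have hzpow : ∀ ε : ℝ, 0 < ε → ε ^ ((1 : ℤ) - (m + 3 : ℕ)) = (ε ^ (m + 2))⁻¹ := by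
    intro ε hε
    have h1 : ((1 : ℤ) - (m + 3 : ℕ)) = -((m + 2 : ℕ) : ℤ) := by push_cast; ring
    rw [h1, zpow_neg, zpow_natCast]
  have heq : ∀ ε : ℝ, 0 < ε →
      (∑ i, a ε i) / (2 * ∑ j, (a ε j)⁻¹) =
        (ε ^ (m + 3 - 1) + ((m + 3 : ℕ) - 1 : ℝ) / ε) /
          (2 * (ε ^ ((1 : ℤ) - (m + 3 : ℕ)) + ((m + 3 : ℕ) - 1 : ℝ) * ε)) := by
    intro ε hε
    rw [hsum ε hε, hsuminv ε hε, hzpow ε hε]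
    norm_num
    ring
  refine ⟨heq, ?_, ?_⟩
  · -- the tendsto part
    have hEq : ∀ᶠ ε in 𝓝[>] (0 : ℝ),
        (∑ i, a ε i) / (2 * ∑ j, (a ε j)⁻¹) =
          (ε ^ (m + 2) + (m + 2) * (1 / ε)) / (2 * ((ε ^ (m + 2))⁻¹ + (m + 2) * ε)) := by
      filter_upwards [self_mem_nhdsWithin] with ε hε
      rw [hsum ε hε, hsuminv ε hε]
    rw [tendsto_congr' hEq]
    have hIoo : Set.Ioo (0 : ℝ) 1 ∈ 𝓝[>] (0 : ℝ) :=
      Ioo_mem_nhdsGT_of_mem ⟨le_refl 0, one_pos⟩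
    have hbig : Tendsto (fun ε : ℝ => ((m : ℝ) + 3) / 2 * ε ^ (m + 1)) (𝓝[>] 0) (𝓝 0) := by
      have : Tendsto (fun ε : ℝ => ((m : ℝ) + 3) / 2 * ε ^ (m + 1)) (𝓝 0) (𝓝 0) := by
        have h := ((continuous_const (y := ((m : ℝ) + 3) / 2)).mul (continuous_pow (m + 1))).tendsto (0 : ℝ)
        simpa [Pi.mul_def] using h
      exact this.mono_left nhdsWithin_le_nhds
    refine tendsto_of_tendsto_of_tendsto_of_le_of_le' tendsto_const_nhds hbig ?_ ?_
    · filter_upwards [self_mem_nhdsWithin] with ε (hε : 0 < ε)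
      apply div_nonneg
      · positivity
      · positivity
    · filter_upwards [hIoo] with ε hε
      obtain ⟨hε0, hε1⟩ := hε
      have hnum : ε ^ (m + 2) + (m + 2) * (1 / ε) ≤ ((m : ℝ) + 3) / ε := by
        have h1 : ε ^ (m + 2) ≤ 1 := pow_le_one₀ hε0.le hε1.le
        have h2 : (1 : ℝ) ≤ 1 / ε := by
          exact one_le_one_div hε0 hε1.le
        have : ε ^ (m + 2) + (m + 2) * (1 / ε) ≤ 1 / ε + (m + 2) * (1 / ε) :=
          add_le_add (h1.trans h2) le_rfl
        calc ε ^ (m + 2) + (m + 2) * (1 / ε) ≤ 1 / ε + (m + 2) * (1 / ε) := this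
          _ = ((m : ℝ) + 3) / ε := by ring
      have hden : 2 * (ε ^ (m + 2))⁻¹ ≤ 2 * ((ε ^ (m + 2))⁻¹ + (m + 2) * ε) := by
        nlinarith [pow_pos hε0 (m + 2), hε0.le]
      have hdpos : (0 : ℝ) < 2 * (ε ^ (m + 2))⁻¹ := by positivity
      calc (ε ^ (m + 2) + (m + 2) * (1 / ε)) / (2 * ((ε ^ (m + 2))⁻¹ + (m + 2) * ε))
          ≤ (((m : ℝ) + 3) / ε) / (2 * (ε ^ (m + 2))⁻¹) :=
            div_le_div₀ (by positivity) hnum hdpos hden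
        _ = ((m : ℝ) + 3) / 2 * ε ^ (m + 1) := by
            field_simp
            ring
  · -- the product part
    intro ε hε
    have : ∀ i : Fin (m + 3), 2 * a ε i = 2 * if (i : ℕ) = 0 then ε ^ (m + 2) else 1 / ε := by
      intro i; rw [ha]; norm_num
    rw [Finset.prod_congr rfl fun i _ => this i]
    rw [prod_ite_fin (m + 2) (ε ^ (m + 2)) (1 / ε)]
    rw [mul_pow]
    have hne : ε ≠ 0 := hε.ne'
    field_simp
    have h1 : ε ^ 2 * ε ^ m * ε⁻¹ ^ 2 * ε⁻¹ ^ m = 1 := by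
      calc _ = (ε * ε⁻¹) ^ (2 + m) := by ring
        _ = 1 := by rw [mul_inv_cancel₀ hne, one_pow]
    linear_combination (2 ^ m * 8 : ℝ) * h1
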